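/- Let k be a positive integer, Λ a finitely aligned k-graph, R a commutative ring with 1, and let KP_R(Λ) with Kumjian-Pask Λ-family {s_λ, s_{μ*}} be the universal Kumjian-Pask algebra of Λ over R, graded over ℤ^k by KP_R(Λ)_n := span_R{s_λ s_{μ*} : d(λ) − d(μ) = n}. If I is a ℤ^k-graded ideal of KP_R(Λ), then I is generated as an ideal by the set I_0 := I ∩ KP_R(Λ)_0. -/

import Mathlib

/-- A higher-rank graph (`k`-graph): a countable small category together with a degree
functor `d` into `ℕᵏ` satisfying the unique factorisation property.  The morphisms form the
type `Path`; the objects (vertices) are identified with the identity paths via `vertex`.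
Composition `comp p q` is only meaningful when `src p = rng q`; all axioms are stated under
this compatibility assumption. -/
structure KGraph (k : ℕ) where
  Obj : Type
  Path : Type
  countable_obj : Countable Obj
  countable_path : Countable Path
  src : Path → Obj
  rng : Path → Obj
  vertex : Obj → Path
  comp : Path → Path → Path
  deg : Path → Fin k → ℕ
  src_vertex : ∀ v, src (vertex v) = v
  rng_vertex : ∀ v, rng (vertex v) = v
  deg_vertex : ∀ v, deg (vertex v) = 0
  vertex_comp : ∀ p, comp (vertex (rng p)) p = p
  comp_vertex : ∀ p, comp p (vertex (src p)) = p
  src_comp : ∀ p q, src p = rng q → src (comp p q) = src q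
  rng_comp : ∀ p q, src p = rng q → rng (comp p q) = rng p
  deg_comp : ∀ p q, src p = rng q → deg (comp p q) = deg p + deg q
  comp_assoc : ∀ p q r, src p = rng q → src q = rng r →
    comp (comp p q) r = comp p (comp q r)
  factorisation : ∀ (p : Path) (m n : Fin k → ℕ), deg p = m + n →
    ∃! x : Path × Path, src x.1 = rng x.2 ∧ deg x.1 = m ∧ deg x.2 = n ∧
      comp x.1 x.2 = p

namespace KGraph

variable {k : ℕ} (Λ : KGraph k)

/-- `Λ^min(p,q)`: the pairs `(ρ,τ)` with `pρ = qτ` a minimal common extension of `p` and `q`. -/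
def minPairs (p q : Λ.Path) : Set (Λ.Path × Λ.Path) :=
  {x | Λ.src p = Λ.rng x.1 ∧ Λ.src q = Λ.rng x.2 ∧
    Λ.comp p x.1 = Λ.comp q x.2 ∧
    Λ.deg (Λ.comp p x.1) = Λ.deg p ⊔ Λ.deg q}

/-- `MCE(p,q)`: minimal common extensions of `p` and `q`. -/
def MCE (p q : Λ.Path) : Set Λ.Path :=
  {t | Λ.deg t = Λ.deg p ⊔ Λ.deg q ∧
    (∃ r, Λ.src p = Λ.rng r ∧ Λ.comp p r = t) ∧
    (∃ r, Λ.src q = Λ.rng r ∧ Λ.comp q r = t)}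

/-- `Λ` is finitely aligned if all the sets `Λ^min(p,q)` are finite. -/
def FinitelyAligned : Prop := ∀ p q, (Λ.minPairs p q).Finite

/-- `E ⊆ vΛ` is exhaustive. -/
def Exhaustive (v : Λ.Obj) (E : Set Λ.Path) : Prop :=
  ∀ p, Λ.rng p = v → ∃ q ∈ E, (Λ.minPairs p q).Nonempty

/-- `E` is a finite exhaustive subset of `vΛ \ {v}`, i.e. an element of `FE(Λ)`
with range vertex `v`. -/
def FE (v : Λ.Obj) (E : Set Λ.Path) : Prop :=
  E.Finite ∧ (∀ p ∈ E, Λ.rng p = v ∧ p ≠ Λ.vertex v) ∧ Λ.Exhaustive v E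

/-- `Ext(p; E)`. -/
def extSet (p : Λ.Path) (E : Set Λ.Path) : Set Λ.Path :=
  ⋃ q ∈ E, {r | ∃ t, (r, t) ∈ Λ.minPairs p q}

section Family

variable {A : Type} [NonUnitalRing A]

/-- (KP1): the vertex elements are mutually orthogonal idempotents. -/
def KP1 (S : Λ.Path → A) : Prop :=
  (∀ v, S (Λ.vertex v) * S (Λ.vertex v) = S (Λ.vertex v)) ∧
  ∀ v w, v ≠ w → S (Λ.vertex v) * S (Λ.vertex w) = 0

/-- (KP2): multiplicativity on composable paths and ghost paths.  Here `T μ` plays the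
role of `S_{μ*}`. -/
def KP2 (S T : Λ.Path → A) : Prop :=
  ∀ p q, Λ.src p = Λ.rng q →
    S p * S q = S (Λ.comp p q) ∧ T q * T p = T (Λ.comp p q)

/-- (KP3): `S_{p*} S_q = ∑_{(ρ,τ) ∈ Λ^min(p,q)} S_ρ S_{τ*}` (empty sum read as `0`). -/
def KP3 (S T : Λ.Path → A) : Prop :=
  ∀ p q, T p * S q = ∑ᶠ x ∈ Λ.minPairs p q, S x.1 * T x.2

/-- (KP4): `∏_{p ∈ E} (S_v - S_p S_{p*}) = 0` for every finite exhaustive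
`E ⊆ vΛ \ {v}`.  The product is implemented as a fold over any duplicate-free list
enumerating `E`, with the harmless extra idempotent factor `S_v` in front. -/
def KP4 (S T : Λ.Path → A) : Prop :=
  ∀ (v : Λ.Obj) (l : List Λ.Path), l.Nodup → Λ.FE v {p | p ∈ l} →
    (l.map fun p => S (Λ.vertex v) - S p * T p).foldl (· * ·) (S (Λ.vertex v)) = 0

/-- A Kumjian–Pask `Λ`-family in a (not necessarily unital) ring: `S p` represents `s_p`
and `T p` represents the ghost element `s_{p*}`, with `T` and `S` agreeing on vertices. -/
def IsKPFamily (S T : Λ.Path → A) : Prop :=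
  (∀ v, T (Λ.vertex v) = S (Λ.vertex v)) ∧
  Λ.KP1 S ∧ Λ.KP2 S T ∧ Λ.KP3 S T ∧ Λ.KP4 S T

end Family

/-- `(B, s, t)` is *the* (universal) Kumjian–Pask algebra of `Λ` over `R`:
`(s, t)` is a Kumjian–Pask `Λ`-family generating `B`, and every Kumjian–Pask `Λ`-family
in an `R`-algebra `A` factors uniquely through it. -/
def IsUniversalKP (R : Type) [CommRing R] (B : Type) [NonUnitalRing B]
    [Module R B] [SMulCommClass R B B] [IsScalarTower R B B]
    (s t : Λ.Path → B) : Prop :=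
  Λ.IsKPFamily s t ∧
  NonUnitalAlgebra.adjoin R (Set.range s ∪ Set.range t) = ⊤ ∧
  ∀ (A : Type) [NonUnitalRing A] [Module R A] [SMulCommClass R A A]
    [IsScalarTower R A A] (S T : Λ.Path → A), Λ.IsKPFamily S T →
      ∃! π : B →ₙₐ[R] A, (∀ p, π (s p) = S p) ∧ (∀ p, π (t p) = T p)

/-- A boundary path of `Λ`: a degree-preserving functor `x : Ω_{k,m} → Λ`
(for `m = deg x ∈ (ℕ∪{∞})ᵏ`), recorded via its segments `seg p q = x(p,q)`
for `p ≤ q ≤ m` (the value of `seg` outside this domain is junk), and satisfying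
the boundary-path condition with respect to finite exhaustive sets. -/
structure BoundaryPath (Λ : KGraph k) where
  deg : Fin k → ℕ∞
  seg : (Fin k → ℕ) → (Fin k → ℕ) → Λ.Path
  deg_seg : ∀ p q, p ≤ q → (∀ i, (q i : ℕ∞) ≤ deg i) → Λ.deg (seg p q) = q - p
  seg_self : ∀ p, (∀ i, (p i : ℕ∞) ≤ deg i) →
    seg p p = Λ.vertex (Λ.src (seg p p))
  src_seg : ∀ p q r, p ≤ q → q ≤ r → (∀ i, (r i : ℕ∞) ≤ deg i) →
    Λ.src (seg p q) = Λ.rng (seg q r)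
  comp_seg : ∀ p q r, p ≤ q → q ≤ r → (∀ i, (r i : ℕ∞) ≤ deg i) →
    Λ.comp (seg p q) (seg q r) = seg p r
  boundary : ∀ n : Fin k → ℕ, (∀ i, (n i : ℕ∞) ≤ deg i) →
    ∀ E : Set Λ.Path, Λ.FE (Λ.src (seg n n)) E →
      ∃ p ∈ E, (∀ i, ((n + Λ.deg p) i : ℕ∞) ≤ deg i) ∧ seg n (n + Λ.deg p) = p

namespace BoundaryPath

variable {Λ : KGraph k}

/-- The vertex `x(n)` of a boundary path. -/
def vtx (x : Λ.BoundaryPath) (n : Fin k → ℕ) : Λ.Obj := Λ.src (x.seg n n)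

/-- The range `r(x) = x(0)` of a boundary path. -/
def rng (x : Λ.BoundaryPath) : Λ.Obj := x.vtx 0

end BoundaryPath

/-- `IsShift n x y` says that `y = σⁿ x` is the shift of the boundary path `x` by
`n ≤ d(x)`. -/
def IsShift (n : Fin k → ℕ) (x y : Λ.BoundaryPath) : Prop :=
  (∀ i, (n i : ℕ∞) ≤ x.deg i) ∧
  (∀ i, y.deg i = x.deg i - (n i : ℕ∞)) ∧
  ∀ p q, p ≤ q → (∀ i, (q i : ℕ∞) ≤ y.deg i) → y.seg p q = x.seg (n + p) (n + q)

/-- `IsConcat p x y` says that `y = p·x` is the concatenation of the path `p` with the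
boundary path `x` (so `y(0, d p) = p` and `σ^{d p} y = x`). -/
def IsConcat (p : Λ.Path) (x y : Λ.BoundaryPath) : Prop :=
  Λ.IsShift (Λ.deg p) y x ∧ y.seg 0 (Λ.deg p) = p

/-- A boundary path `x` is aperiodic if distinct paths with source `r(x)` give distinct
concatenations `p·x ≠ q·x`. -/
def AperiodicBP (x : Λ.BoundaryPath) : Prop :=
  ∀ p q, Λ.src p = x.rng → Λ.src q = x.rng → p ≠ q →
    ∀ y, Λ.IsConcat p x y → ¬Λ.IsConcat q x y

/-- `Λ` is aperiodic: every vertex receives an aperiodic boundary path. -/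
def Aperiodic : Prop :=
  ∀ v : Λ.Obj, ∃ x : Λ.BoundaryPath, x.rng = v ∧ Λ.AperiodicBP x

/-- `Λ` is cofinal: for every vertex `v` and boundary path `x` there is `n ≤ d(x)`
with `vΛx(n) ≠ ∅`. -/
def Cofinal : Prop :=
  ∀ (v : Λ.Obj) (x : Λ.BoundaryPath), ∃ n : Fin k → ℕ,
    (∀ i, (n i : ℕ∞) ≤ x.deg i) ∧ ∃ p, Λ.rng p = v ∧ Λ.src p = x.vtx n

/-- The boundary-path groupoid `G_Λ` as a set of triples `(x, m, y)` with
`σᵖ x = σ^q y` and `m = p - q`. -/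
def BPG : Set (Λ.BoundaryPath × (Fin k → ℤ) × Λ.BoundaryPath) :=
  {a | ∃ (p q : Fin k → ℕ) (z : Λ.BoundaryPath),
    (fun i => (p i : ℤ) - (q i : ℤ)) = a.2.1 ∧
    Λ.IsShift p a.1 z ∧ Λ.IsShift q a.2.2 z}

/-- `Z(p) = p ∂Λ`, the cylinder set of boundary paths with prefix `p`. -/
def ZC (p : Λ.Path) : Set Λ.BoundaryPath := {x | ∃ z, Λ.IsConcat p z x}

/-- `Z(p *ₛ q)`. -/
def ZP (p q : Λ.Path) : Set (Λ.BoundaryPath × (Fin k → ℤ) × Λ.BoundaryPath) :=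
  {a | a.2.1 = (fun i => (Λ.deg p i : ℤ) - (Λ.deg q i : ℤ)) ∧
    a.1 ∈ Λ.ZC p ∧ a.2.2 ∈ Λ.ZC q ∧
    ∃ z, Λ.IsShift (Λ.deg p) a.1 z ∧ Λ.IsShift (Λ.deg q) a.2.2 z}

/-- `Z(p *ₛ q \ G)`. -/
def ZPD (p q : Λ.Path) (G : Set Λ.Path) :
    Set (Λ.BoundaryPath × (Fin k → ℤ) × Λ.BoundaryPath) :=
  Λ.ZP p q \ ⋃ ν ∈ G, Λ.ZP (Λ.comp p ν) (Λ.comp q ν)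

/-- The boundary-path groupoid `G_Λ` as a type. -/
abbrev bpSpace : Type := {a // a ∈ Λ.BPG}

/-- The topology on `G_Λ` generated by the basic sets `Z(p *ₛ q \ G)` with `G` finite. -/
def bpTop : TopologicalSpace Λ.bpSpace :=
  TopologicalSpace.generateFrom
    {V | ∃ (p q : Λ.Path) (G : Set Λ.Path), Λ.src p = Λ.src q ∧
      (∀ ν ∈ G, Λ.rng ν = Λ.src p) ∧ G.Finite ∧
      V = Subtype.val ⁻¹' Λ.ZPD p q G}

theorem isShift_zero (x : Λ.BoundaryPath) : Λ.IsShift 0 x x :=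
  ⟨fun i => by simp, fun i => by simp, fun p q _ _ => by simp⟩

/-- The unit space `G_Λ^{(0)}` of the boundary-path groupoid. -/
def unitSet : Set Λ.bpSpace := {a | a.1.2.1 = 0 ∧ a.1.1 = a.1.2.2}

/-- The unit `(x, 0, x)` of `G_Λ` corresponding to a boundary path `x`. -/
def unitOf (x : Λ.BoundaryPath) : Λ.bpSpace :=
  ⟨(x, 0, x), ⟨0, 0, x, by funext i; simp, Λ.isShift_zero x, Λ.isShift_zero x⟩⟩

end KGraph

/-- The degree-`n` component `KP_R(Λ)_n = span_R{s_p t_q : d(p) - d(q) = n}`. -/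
def kpComponent {k : ℕ} (Λ : KGraph k) (R : Type) [CommRing R] {B : Type}
    [NonUnitalRing B] [Module R B] (s t : Λ.Path → B) (n : Fin k → ℤ) :
    Submodule R B :=
  Submodule.span R {b | ∃ p q : Λ.Path,
    (fun i => (Λ.deg p i : ℤ) - (Λ.deg q i : ℤ)) = n ∧ b = s p * t q}

/-- A subset of a (not necessarily unital) ring is a two-sided ideal. -/
def IsIdealSet {B : Type} [NonUnitalRing B] (I : Set B) : Prop :=
  (0 : B) ∈ I ∧ (∀ a ∈ I, ∀ b ∈ I, a + b ∈ I) ∧ (∀ a ∈ I, -a ∈ I) ∧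
  ∀ a ∈ I, ∀ b : B, a * b ∈ I ∧ b * a ∈ I


section Aux

open KGraph

variable {k : ℕ} {Λ : KGraph k} {R : Type} [CommRing R] {B : Type}
  [NonUnitalRing B] [Module R B] [SMulCommClass R B B] [IsScalarTower R B B]
  {s t : Λ.Path → B}

/-- A path of degree zero is the vertex path at its range. -/
lemma deg_zero_eq {r : Λ.Path} (h : Λ.deg r = 0) : r = Λ.vertex (Λ.rng r) := by
  obtain ⟨x, _, hu⟩ := Λ.factorisation r 0 0 (by rw [h, add_zero])
  have h1 := hu (r, Λ.vertex (Λ.src r))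
    ⟨by rw [Λ.rng_vertex], h, Λ.deg_vertex _, Λ.comp_vertex r⟩
  have h2 := hu (Λ.vertex (Λ.rng r), r)
    ⟨by rw [Λ.src_vertex], Λ.deg_vertex _, h, Λ.vertex_comp r⟩
  exact congrArg Prod.fst (h1.trans h2.symm)

lemma minPairs_self (p : Λ.Path) :
    Λ.minPairs p p = {(Λ.vertex (Λ.src p), Λ.vertex (Λ.src p))} := by
  ext x
  constructor
  · rintro ⟨h1, h2, h3, h4⟩
    have hsup : Λ.deg p ⊔ Λ.deg p = Λ.deg p := sup_idem _
    have e1 : Λ.deg p + Λ.deg x.1 = Λ.deg p := by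
      rw [← Λ.deg_comp p x.1 h1, h4, hsup]
    have e2 : Λ.deg p + Λ.deg x.2 = Λ.deg p := by
      rw [← Λ.deg_comp p x.2 h2, ← h3, h4, hsup]
    have d1 : Λ.deg x.1 = 0 := by
      funext i; have := congrFun e1 i; simp only [Pi.add_apply] at this
      simp only [Pi.zero_apply]; omega
    have d2 : Λ.deg x.2 = 0 := by
      funext i; have := congrFun e2 i; simp only [Pi.add_apply] at this
      simp only [Pi.zero_apply]; omega
    have hx1 : x.1 = Λ.vertex (Λ.src p) := by rw [deg_zero_eq d1, ← h1]
    have hx2 : x.2 = Λ.vertex (Λ.src p) := by rw [deg_zero_eq d2, ← h2]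
    have : x = (x.1, x.2) := rfl
    rw [Set.mem_singleton_iff, this, hx1, hx2]
  · rintro rfl
    refine ⟨(Λ.rng_vertex _).symm, (Λ.rng_vertex _).symm, rfl, ?_⟩
    rw [Λ.comp_vertex p, sup_idem]

lemma minPairs_swap_mem {p q : Λ.Path} {x : Λ.Path × Λ.Path}
    (hx : x ∈ Λ.minPairs p q) : x.swap ∈ Λ.minPairs q p := by
  obtain ⟨m1, m2, m3, m4⟩ := hx
  exact ⟨m2, m1, m3.symm, show Λ.deg (Λ.comp q x.2) = _ by rw [← m3, m4, sup_comm]⟩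

variable (hF : Λ.IsKPFamily s t)
include hF

lemma ts_self (p : Λ.Path) : t p * s p = s (Λ.vertex (Λ.src p)) := by
  have h := hF.2.2.2.1 p p
  rw [minPairs_self, finsum_mem_singleton] at h
  rw [h, hF.1 (Λ.src p), (hF.2.1).1 _]

lemma s_vsrc (p : Λ.Path) : s p * s (Λ.vertex (Λ.src p)) = s p := by
  have h := (hF.2.2.1 p (Λ.vertex (Λ.src p)) (Λ.rng_vertex _).symm).1
  rwa [Λ.comp_vertex] at h

lemma vsrc_t (q : Λ.Path) : s (Λ.vertex (Λ.src q)) * t q = t q := by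
  have h := (hF.2.2.1 q (Λ.vertex (Λ.src q)) (Λ.rng_vertex _).symm).2
  rw [Λ.comp_vertex] at h
  rwa [hF.1] at h

lemma st_ne {p q : Λ.Path} (h : Λ.src p ≠ Λ.src q) : s p * t q = 0 := by
  have : s p * t q = s p * (s (Λ.vertex (Λ.src p)) * s (Λ.vertex (Λ.src q))) * t q := by
    rw [← mul_assoc, mul_assoc (s p), ← mul_assoc, s_vsrc hF, mul_assoc, vsrc_t hF]
  rw [this, (hF.2.1).2 _ _ h, mul_zero, zero_mul]

lemma st_absorb (p q : Λ.Path) : (s p * t q) * (s q * t q) = s p * t q := by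
  rw [mul_assoc, ← mul_assoc (t q), ts_self hF, vsrc_t hF]

lemma kp3' (hΛ : Λ.FinitelyAligned) (p q : Λ.Path) :
    t p * s q = ∑ x ∈ (hΛ p q).toFinset, s x.1 * t x.2 := by
  rw [hF.2.2.2.1 p q, ← finsum_mem_coe_finset, Set.Finite.coe_toFinset]

lemma st_mul_st (hΛ : Λ.FinitelyAligned) {p q u w : Λ.Path}
    (hpq : Λ.src p = Λ.src q) (huw : Λ.src u = Λ.src w) :
    (s p * t q) * (s u * t w) =
      ∑ x ∈ (hΛ q u).toFinset, s (Λ.comp p x.1) * t (Λ.comp w x.2) := by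
  rw [mul_assoc, ← mul_assoc (t q), kp3' hF hΛ, Finset.sum_mul, Finset.mul_sum]
  refine Finset.sum_congr rfl fun x hx => ?_
  obtain ⟨m1, m2, -, -⟩ := (Set.Finite.mem_toFinset _).1 hx
  rw [mul_assoc (s x.1), ← mul_assoc (s p), (hF.2.2.1 p x.1 (hpq.trans m1)).1,
    (hF.2.2.1 w x.2 (huw.symm.trans m2)).2]

lemma Rproj_mul (hΛ : Λ.FinitelyAligned) (p q : Λ.Path) :
    (s p * t p) * (s q * t q) =
      ∑ x ∈ (hΛ p q).toFinset, s (Λ.comp p x.1) * t (Λ.comp p x.1) := by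
  rw [st_mul_st hF hΛ rfl rfl]
  refine Finset.sum_congr rfl fun x hx => ?_
  obtain ⟨-, -, m3, -⟩ := (Set.Finite.mem_toFinset _).1 hx
  rw [← m3]

lemma Rproj_comm (hΛ : Λ.FinitelyAligned) (p q : Λ.Path) :
    (s p * t p) * (s q * t q) = (s q * t q) * (s p * t p) := by
  rw [Rproj_mul hF hΛ p q, Rproj_mul hF hΛ q p]
  refine Finset.sum_nbij' Prod.swap Prod.swap ?_ ?_ ?_ ?_ ?_
  · intro a ha
    exact (Set.Finite.mem_toFinset _).2
      (minPairs_swap_mem ((Set.Finite.mem_toFinset _).1 ha))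
  · intro a ha
    exact (Set.Finite.mem_toFinset _).2
      (minPairs_swap_mem ((Set.Finite.mem_toFinset _).1 ha))
  · intro a _; rfl
  · intro a _; rfl
  · intro a ha
    obtain ⟨-, -, m3, -⟩ := (Set.Finite.mem_toFinset _).1 ha
    rw [show Λ.comp q a.swap.1 = Λ.comp p a.1 from m3.symm]

/-- Multiplying a degree-`n` element on the right by `s q₀ * t p₀` with
`d p₀ - d q₀ = n` lands in the degree-zero component. -/
lemma mem_comp_zero (hΛ : Λ.FinitelyAligned) {n : Fin k → ℤ} {p₀ q₀ : Λ.Path}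
    (h₀ : (fun i => (Λ.deg p₀ i : ℤ) - (Λ.deg q₀ i : ℤ)) = n) {x : B}
    (hx : x ∈ kpComponent Λ R s t n) :
    x * (s q₀ * t p₀) ∈ kpComponent Λ R s t 0 := by
  induction hx using Submodule.span_induction with
  | mem b hb =>
    obtain ⟨p', q', hd, rfl⟩ := hb
    by_cases h1 : Λ.src p' = Λ.src q'
    · by_cases h2 : Λ.src q₀ = Λ.src p₀
      · rw [st_mul_st hF hΛ h1 h2]
        refine Submodule.sum_mem _ fun x hx => Submodule.subset_span ?_
        obtain ⟨m1, m2, m3, m4⟩ := (Set.Finite.mem_toFinset _).1 hx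
        refine ⟨Λ.comp p' x.1, Λ.comp p₀ x.2, ?_, rfl⟩
        funext i
        have e : Λ.deg q' + Λ.deg x.1 = Λ.deg q₀ + Λ.deg x.2 := by
          rw [← Λ.deg_comp _ _ m1, ← Λ.deg_comp _ _ m2, m3]
        have ei := congrFun e i
        simp only [Pi.add_apply] at ei
        have e1 := congrFun hd i
        have e2 := congrFun h₀ i
        rw [Λ.deg_comp _ _ (h1.trans m1), Λ.deg_comp _ _ (h2.symm.trans m2)]
        simp only [Pi.add_apply, Pi.zero_apply]
        push_cast
        omega
      · rw [st_ne hF h2, mul_zero]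
        exact Submodule.zero_mem _
    · rw [st_ne hF h1, zero_mul]
      exact Submodule.zero_mem _
  | zero => rw [zero_mul]; exact Submodule.zero_mem _
  | add y z _ _ hy hz => rw [add_mul]; exact Submodule.add_mem _ hy hz
  | smul r y _ hy => rw [smul_mul_assoc]; exact Submodule.smul_mem _ _ hy

end Aux

section Fold

variable {R : Type} [CommRing R] {B : Type} [NonUnitalRing B] [Module R B]
  [IsScalarTower R B B]

/-- `Fld a [e₁, …, eₘ]` is `a (1-e₁)⋯(1-eₘ)`, computed in the unitisation. -/
def Fld (a : B) (l : List B) : B := l.foldl (fun b e => b - b * e) a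

lemma Fld_zero : ∀ l : List B, Fld (0 : B) l = 0
  | [] => rfl
  | e :: l => by
      show Fld (0 - 0 * e) l = 0
      rw [zero_mul, sub_zero]; exact Fld_zero l

lemma Fld_add : ∀ (l : List B) (a b : B), Fld (a + b) l = Fld a l + Fld b l
  | [], a, b => rfl
  | e :: l, a, b => by
      show Fld (a + b - (a + b) * e) l = Fld (a - a * e) l + Fld (b - b * e) l
      rw [show a + b - (a + b) * e = (a - a * e) + (b - b * e) by rw [add_mul]; abel]
      exact Fld_add l _ _

lemma Fld_smul : ∀ (l : List B) (r : R) (a : B), Fld (r • a) l = r • Fld a l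
  | [], r, a => rfl
  | e :: l, r, a => by
      show Fld (r • a - r • a * e) l = r • Fld (a - a * e) l
      rw [smul_mul_assoc, ← smul_sub]
      exact Fld_smul l _ _

lemma Fld_absorb : ∀ (l : List B) (a e : B),
    (∀ x ∈ l, ∀ y ∈ l, x * y = y * x) → e ∈ l → a * e = a → Fld a l = 0
  | [], _, _, _, he, _ => absurd he List.not_mem_nil
  | f :: l, a, e, hcomm, he, hae => by
      show Fld (a - a * f) l = 0
      rcases List.mem_cons.1 he with rfl | he'
      · rw [hae, sub_self]; exact Fld_zero l
      · refine Fld_absorb l (a - a * f) e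
          (fun x hx y hy => hcomm x (List.mem_cons_of_mem _ hx) y
            (List.mem_cons_of_mem _ hy)) he' ?_
        have hfe : f * e = e * f :=
          hcomm f List.mem_cons_self e (List.mem_cons_of_mem _ he')
        rw [sub_mul, mul_assoc, hfe, ← mul_assoc, hae]

lemma Fld_sub_mem : ∀ (l : List B) {J : Set B} (_ : IsIdealSet J) (a b : B),
    (∀ e ∈ l, a * e ∈ J) → a - b ∈ J → a - Fld b l ∈ J
  | [], _, _, _, _, _, hab => hab
  | e :: l, J, hJ, a, b, hmul, hab => by
      show a - Fld (b - b * e) l ∈ J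
      refine Fld_sub_mem l hJ a (b - b * e)
        (fun f hf => hmul f (List.mem_cons_of_mem _ hf)) ?_
      have h1 : a * e ∈ J := hmul e List.mem_cons_self
      have hba : b - a ∈ J := by
        have := hJ.2.2.1 _ hab; rwa [neg_sub] at this
      have h2 : (b - a) * e ∈ J := (hJ.2.2.2 _ hba e).1
      have h3 : a - b + ((b - a) * e + a * e) ∈ J :=
        hJ.2.1 _ hab _ (hJ.2.1 _ h2 _ h1)
      have : a - (b - b * e) = a - b + ((b - a) * e + a * e) := by
        rw [sub_mul]; abel
      rwa [this]

lemma Fld_sum {ι : Type*} (l : List B) (S : Finset ι) (f : ι → B) :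
    Fld (∑ i ∈ S, f i) l = ∑ i ∈ S, Fld (f i) l := by
  classical
  induction S using Finset.induction_on with
  | empty => simpa using Fld_zero l
  | insert _ _ hx ih =>
      rw [Finset.sum_insert hx, Finset.sum_insert hx, Fld_add, ih]

lemma ideal_sum {J : Set B} (hJ : IsIdealSet J) {ι : Type*} (S : Finset ι)
    (f : ι → B) (h : ∀ i ∈ S, f i ∈ J) : ∑ i ∈ S, f i ∈ J :=
  Finset.sum_induction f (· ∈ J) (fun a b ha hb => hJ.2.1 a ha b hb) hJ.1 h

end Fold

section Homog

variable {k : ℕ} {Λ : KGraph k} {R : Type} [CommRing R] {B : Type}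
  [NonUnitalRing B] [Module R B] [SMulCommClass R B B] [IsScalarTower R B B]
  {s t : Λ.Path → B}

/-- The key lemma: a homogeneous element of a graded ideal `I` lies in every ideal
containing `I ∩ KP₀`. -/
lemma homog_mem (hΛ : Λ.FinitelyAligned) (hF : Λ.IsKPFamily s t)
    {I J : Set B} (hI : IsIdealSet I) (hJ : IsIdealSet J)
    (hJ0 : I ∩ (kpComponent Λ R s t 0 : Set B) ⊆ J) {n : Fin k → ℤ} {x : B}
    (hxI : x ∈ I) (hx : x ∈ kpComponent Λ R s t n) : x ∈ J := by
  classical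
  obtain ⟨c, hsupp, hsum⟩ := Submodule.mem_span_set.mp hx
  by_cases hs : c.support = ∅
  · have : x = 0 := by
      rw [← hsum, Finsupp.sum, hs, Finset.sum_empty]
    rw [this]; exact hJ.1
  · obtain ⟨b₀, hb₀⟩ := Finset.nonempty_iff_ne_empty.2 hs
    obtain ⟨p₀, -, -⟩ := hsupp hb₀
    haveI : Nonempty Λ.Path := ⟨p₀⟩
    have hex : ∀ b ∈ c.support, ∃ p q : Λ.Path,
        (fun i => (Λ.deg p i : ℤ) - (Λ.deg q i : ℤ)) = n ∧ b = s p * t q :=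
      fun b hb => hsupp hb
    choose! P Q h1 h2 using hex
    set T : Finset B := c.support.filter (fun b => Λ.src (P b) = Λ.src (Q b))
      with hT
    set l : List B := T.toList.map (fun b => s (Q b) * t (Q b)) with hl
    have hcomm : ∀ e ∈ l, ∀ f ∈ l, e * f = f * e := by
      intro e he f hf
      obtain ⟨be, -, rfl⟩ := List.mem_map.1 he
      obtain ⟨bf, -, rfl⟩ := List.mem_map.1 hf
      exact Rproj_comm hF hΛ _ _
    have hmulJ : ∀ e ∈ l, x * e ∈ J := by
      intro e he
      obtain ⟨b, hb, rfl⟩ := List.mem_map.1 he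
      have hbT : b ∈ T := (Finset.mem_toList).1 hb
      have hbs : b ∈ c.support := Finset.mem_of_mem_filter _ hbT
      have hmatch : Λ.src (P b) = Λ.src (Q b) := (Finset.mem_filter.1 hbT).2
      have hfac : s (Q b) * t (Q b) =
          (s (Q b) * t (P b)) * (s (P b) * t (Q b)) := by
        rw [mul_assoc, ← mul_assoc (t (P b)), ts_self hF, hmatch, vsrc_t hF]
      rw [hfac, ← mul_assoc]
      have hI1 : x * (s (Q b) * t (P b)) ∈ I := (hI.2.2.2 x hxI _).1
      have hK0 : x * (s (Q b) * t (P b)) ∈ kpComponent Λ R s t 0 :=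
        mem_comp_zero hF hΛ (h1 b hbs) hx
      exact (hJ.2.2.2 _ (hJ0 ⟨hI1, hK0⟩) _).1
    have hFb : ∀ b ∈ c.support, Fld b l = 0 := by
      intro b hb
      by_cases hm : Λ.src (P b) = Λ.src (Q b)
      · have hbT : b ∈ T := Finset.mem_filter.2 ⟨hb, hm⟩
        have hel : s (Q b) * t (Q b) ∈ l :=
          List.mem_map_of_mem ((Finset.mem_toList).2 hbT)
        refine Fld_absorb l b _ hcomm hel ?_
        have habs := st_absorb hF (P b) (Q b)
        rwa [← h2 b hb] at habs
      · have : b = 0 := by rw [h2 b hb]; exact st_ne hF hm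
        rw [this]; exact Fld_zero l
    have hFx : Fld x l = 0 := by
      conv_lhs => rw [← hsum, Finsupp.sum]
      rw [Fld_sum]
      refine Finset.sum_eq_zero fun b hb => ?_
      rw [Fld_smul, hFb b hb, smul_zero]
    have := Fld_sub_mem l hJ x x hmulJ (by rw [sub_self]; exact hJ.1)
    rwa [hFx, sub_zero] at this

end Homog

/-- a `ℤᵏ`-graded ideal `I` of `KP_R(Λ)` is generated, as an ideal, by
`I₀ = I ∩ KP_R(Λ)_0`; i.e. `I` is the smallest ideal containing `I₀`. -/
theorem graded_ideal_generated_by_core {k : ℕ} (hk : 0 < k) (Λ : KGraph k)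
    (hΛ : Λ.FinitelyAligned) (R : Type) [CommRing R]
    (B : Type) [NonUnitalRing B] [Module R B] [SMulCommClass R B B]
    [IsScalarTower R B B] (s t : Λ.Path → B)
    (hU : Λ.IsUniversalKP R B s t)
    (I : Set B) (hI : IsIdealSet I)
    (hgr : ∀ a ∈ I, ∃ c : (Fin k → ℤ) →₀ B,
      (∀ n, c n ∈ I ∧ c n ∈ kpComponent Λ R s t n) ∧ (c.sum fun _ x => x) = a) :
    I = ⋂₀ {J : Set B | IsIdealSet J ∧
      I ∩ (kpComponent Λ R s t 0 : Set B) ⊆ J} := by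
  refine Set.Subset.antisymm ?_ (Set.sInter_subset_of_mem ⟨hI, Set.inter_subset_left⟩)
  intro a ha
  rw [Set.mem_sInter]
  rintro J ⟨hJ, hJ0⟩
  obtain ⟨c, hc, hcsum⟩ := hgr a ha
  rw [← hcsum, Finsupp.sum]
  exact ideal_sum hJ _ _ fun m _ => homog_mem hΛ hU.1 hI hJ hJ0 (hc m).1 (hc m).2
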